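/- Let F be a field and let L be a nilpotent symplectic alternating algebra of dimension 10 over F whose centre Z(L) is isotropic of dimension 4, with L³ = Z(L), of type C. Suppose L has presentation 𝒫₁₀^{(4,4)}(α,β) with respect to a standard basis x₁,y₁,…,x₅,y₅ and presentation 𝒫₁₀^{(4,4)}(α̃,β̃) with respect to a standard basis x̃₁,ỹ₁,…,x̃₅,ỹ₅, where x̃₁ + Z(L) = x₁ + Z(L) and ỹ₁ + Z(L) = y₁ + Z(L). Then α̃ = α and β̃ = β. -/

import Mathlib

universe u

/-- A symplectic alternating algebra (SAA) over a field `F`: a vector space with a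
nondegenerate alternating bilinear form and an alternating bilinear product
satisfying `(x·y, z) = (y·z, x)`. -/
structure SAA (F : Type u) [Field F] : Type (u + 1) where
  carrier : Type u
  [isAddCommGroup : AddCommGroup carrier]
  [isModule : Module F carrier]
  form : carrier →ₗ[F] carrier →ₗ[F] F
  mul : carrier →ₗ[F] carrier →ₗ[F] carrier
  form_alt : ∀ x, form x x = 0
  form_nondeg : ∀ x, (∀ y, form x y = 0) → x = 0
  mul_alt : ∀ x, mul x x = 0
  form_symm : ∀ x y z, form (mul x y) z = form (mul y z) x

attribute [instance] SAA.isAddCommGroup SAA.isModule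

namespace SAA

variable {F : Type u} [Field F]

/-- The span of all products `u·v` with `u ∈ U`, `v ∈ V`. -/
def prodSpace (L : SAA F) (U V : Submodule F L.carrier) : Submodule F L.carrier :=
  Submodule.span F {w | ∃ u ∈ U, ∃ v ∈ V, L.mul u v = w}

/-- Powers of the algebra: `L¹ = L`, `L^{k+1} = span {u·v : u ∈ L^k, v ∈ L}`. -/
def pow (L : SAA F) : ℕ → Submodule F L.carrier
  | 0 => ⊤
  | 1 => ⊤
  | n + 2 => L.prodSpace (L.pow (n + 1)) ⊤

/-- The centre `Z(L) = {x : x·y = 0 for all y}`. -/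
def centre (L : SAA F) : Submodule F L.carrier where
  carrier := {x | ∀ y, L.mul x y = 0}
  add_mem' := by
    intro a b ha hb
    intro y
    rw [map_add, LinearMap.add_apply, ha y, hb y, add_zero]
  zero_mem' := by
    intro y
    rw [map_zero, LinearMap.zero_apply]
  smul_mem' := by
    intro c a ha
    intro y
    rw [map_smul, LinearMap.smul_apply, ha y, smul_zero]

/-- `{x : x·a ∈ B for all a ∈ A}`. -/
def transporter (L : SAA F) (A B : Submodule F L.carrier) : Submodule F L.carrier where
  carrier := {x | ∀ a ∈ A, L.mul x a ∈ B}
  add_mem' := by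
    intro u v hu hv a ha
    rw [map_add, LinearMap.add_apply]
    exact B.add_mem (hu a ha) (hv a ha)
  zero_mem' := by
    intro a ha
    rw [map_zero, LinearMap.zero_apply]
    exact B.zero_mem
  smul_mem' := by
    intro c u hu a ha
    rw [map_smul, LinearMap.smul_apply]
    exact B.smul_mem c (hu a ha)

/-- `L` is nilpotent if some power vanishes. -/
def IsNilpotentAlg (L : SAA F) : Prop := ∃ n, L.pow n = ⊥

/-- `L` is nilpotent of class `k` if `L^{k+1} = 0` and `L^k ≠ 0`. -/
def IsClass (L : SAA F) (k : ℕ) : Prop := L.pow (k + 1) = ⊥ ∧ L.pow k ≠ ⊥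

/-- A subspace is isotropic if the form vanishes identically on it. -/
def IsIsotropic (L : SAA F) (U : Submodule F L.carrier) : Prop :=
  ∀ u ∈ U, ∀ v ∈ U, L.form u v = 0

/-- A standard basis `x₁,y₁,…,x₅,y₅` (indexed by `Fin 5 ⊕ Fin 5`, with `Sum.inl i` the
vector `x_{i+1}` and `Sum.inr i` the vector `y_{i+1}`): a basis with
`(xᵢ,xⱼ) = (yᵢ,yⱼ) = 0` and `(xᵢ,yⱼ) = δᵢⱼ`. -/
def IsStandardBasis (L : SAA F) (b : Fin 5 ⊕ Fin 5 → L.carrier) : Prop :=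
  LinearIndependent F b ∧ Submodule.span F (Set.range b) = ⊤ ∧
    (∀ i j, L.form (b (Sum.inl i)) (b (Sum.inl j)) = 0) ∧
    (∀ i j, L.form (b (Sum.inr i)) (b (Sum.inr j)) = 0) ∧
    (∀ i j : Fin 5, L.form (b (Sum.inl i)) (b (Sum.inr j)) = if i = j then 1 else 0)

/-- A presentation: a list of triples of basis indices together with the prescribed
value of the triple form on them. -/
abbrev Pres (F : Type u) : Type u :=
  List ((Fin 5 ⊕ Fin 5) × (Fin 5 ⊕ Fin 5) × (Fin 5 ⊕ Fin 5) × F)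

/-- The alternating trilinear form `T(u,v,w) = (u·v, w)`. -/
def triple (L : SAA F) (u v w : L.carrier) : F := L.form (L.mul u v) w

/-- The index of the basis vector `x_{i+1}`. -/
def xi (i : Fin 5) : Fin 5 ⊕ Fin 5 := Sum.inl i

/-- The index of the basis vector `y_{i+1}`. -/
def yi (i : Fin 5) : Fin 5 ⊕ Fin 5 := Sum.inr i

/-- `b` is a standard basis realizing the presentation `P`: the triple form takes the
listed values on the listed triples of basis vectors and vanishes on every triple of
basis vectors which is not a permutation of a listed triple. -/
def IsPresBasis (L : SAA F) (b : Fin 5 ⊕ Fin 5 → L.carrier) (P : Pres F) : Prop :=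
  L.IsStandardBasis b ∧
    (∀ e ∈ P, L.triple (b e.1) (b e.2.1) (b e.2.2.1) = e.2.2.2) ∧
    (∀ i j k : Fin 5 ⊕ Fin 5,
      (∀ e ∈ P, ({i, j, k} : Multiset (Fin 5 ⊕ Fin 5)) ≠ {e.1, e.2.1, e.2.2.1}) →
      L.triple (b i) (b j) (b k) = 0)

/-- `L` has the presentation `P` (with respect to some standard basis). -/
def HasPres (L : SAA F) (P : Pres F) : Prop := ∃ b, L.IsPresBasis b P

/-- Isomorphism of symplectic alternating algebras: a linear equivalence preserving
the form and the product. -/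
def Iso (L M : SAA F) : Prop :=
  ∃ e : L.carrier ≃ₗ[F] M.carrier,
    (∀ u v, M.form (e u) (e v) = L.form u v) ∧
    (∀ u v, e (L.mul u v) = M.mul (e u) (e v))

/-- The alternating form `φ_z̄` induced on `L/L²` by `z ∈ L²` (given by
`φ_z̄(ū,v̄) = (z·u, v)`) is degenerate: some `u ∉ L²` lies in its radical. -/
def PhiDegen (L : SAA F) (z : L.carrier) : Prop :=
  ∃ u, u ∉ L.pow 2 ∧ ∀ v, L.form (L.mul z u) v = 0

/-- Type A: there is a basis `z̄, t̄` of `L²/Z(L)` with both `φ_z̄` and `φ_t̄` degenerate. -/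
def TypeA (L : SAA F) : Prop :=
  ∃ z t, z ∈ L.pow 2 ∧ t ∈ L.pow 2 ∧
    (∀ a b : F, a • z + b • t ∈ L.centre → a = 0 ∧ b = 0) ∧
    Submodule.span F {z, t} ⊔ L.centre = L.pow 2 ∧
    L.PhiDegen z ∧ L.PhiDegen t

/-- Type B: there is `0 ≠ z̄ ∈ L²/Z(L)` with `φ_z̄` degenerate, while `φ_t̄` is
nondegenerate for every `t̄ ∉ F z̄`. -/
def TypeB (L : SAA F) : Prop :=
  ∃ z, z ∈ L.pow 2 ∧ z ∉ L.centre ∧ L.PhiDegen z ∧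
    ∀ t ∈ L.pow 2, (¬∃ a : F, t - a • z ∈ L.centre) → ¬L.PhiDegen t

/-- Type C: `φ_z̄` is nondegenerate for every `0 ≠ z̄ ∈ L²/Z(L)`. -/
def TypeC (L : SAA F) : Prop :=
  ∀ z ∈ L.pow 2, z ∉ L.centre → ¬L.PhiDegen z

/-- `L` is a nilpotent SAA of dimension 10 whose centre is isotropic of dimension 4. -/
def Cond4 (L : SAA F) : Prop :=
  L.IsNilpotentAlg ∧ Module.finrank F L.carrier = 10 ∧
    L.IsIsotropic L.centre ∧ Module.finrank F ↥L.centre = 4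

/-- `L` is a nilpotent SAA of dimension 10, centre isotropic of dimension 4,
`L³ = Z(L)`, of type C. -/
def Cond4C (L : SAA F) : Prop := Cond4 L ∧ L.pow 3 = L.centre ∧ L.TypeC

/-- `L` is a SAA of dimension 10 with isotropic centre of dimension 2, nilpotent of
class `k`. -/
def Cond2 (L : SAA F) (k : ℕ) : Prop :=
  Module.finrank F L.carrier = 10 ∧ L.IsIsotropic L.centre ∧
    Module.finrank F ↥L.centre = 2 ∧ L.IsClass k

/-- The characteristic subspace `U = {x ∈ L⁴ : x·L³ ⊆ L⁵·L²}`. -/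
def Usub (L : SAA F) : Submodule F L.carrier :=
  L.pow 4 ⊓ L.transporter (L.pow 3) (L.prodSpace (L.pow 5) (L.pow 2))

end SAA

namespace SAA

variable (F : Type u) [Field F]

/-- Presentation `𝒫₁₀^{(4,1)}`: `(y₂y₃,y₄)=1, (y₁y₄,y₅)=1, (x₁y₃,y₅)=1`. -/
def P41 : Pres F := [(yi 1, yi 2, yi 3, 1), (yi 0, yi 3, yi 4, 1), (xi 0, yi 2, yi 4, 1)]

/-- Presentation `𝒫₁₀^{(4,2)}`: `(x₁y₂,y₃)=1, (y₁y₄,y₅)=1`. -/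
def P42 : Pres F := [(xi 0, yi 1, yi 2, 1), (yi 0, yi 3, yi 4, 1)]

/-- Presentation `𝒫₁₀^{(4,3)}`: `(x₁y₂,y₃)=1, (y₁y₂,y₄)=1, (y₁y₃,y₅)=1`. -/
def P43 : Pres F := [(xi 0, yi 1, yi 2, 1), (yi 0, yi 1, yi 3, 1), (yi 0, yi 2, yi 4, 1)]

/-- Presentation `𝒫₁₀^{(4,4)}(α,β)`:
`(x₁y₂,y₃)=1, (x₁y₃,y₄)=α, (x₁y₄,y₅)=β, (y₁y₂,y₅)=1, (y₁y₃,y₄)=1`. -/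
def P44 (α β : F) : Pres F :=
  [(xi 0, yi 1, yi 2, 1), (xi 0, yi 2, yi 3, α), (xi 0, yi 3, yi 4, β),
   (yi 0, yi 1, yi 4, 1), (yi 0, yi 2, yi 3, 1)]

/-- Presentation `𝒫(β)`: `(x₁y₂,y₃)=1, (x₁y₄,y₅)=β, (y₁y₂,y₅)=1, (y₁y₃,y₄)=1`. -/
def Pbeta (β : F) : Pres F :=
  [(xi 0, yi 1, yi 2, 1), (xi 0, yi 3, yi 4, β), (yi 0, yi 1, yi 4, 1), (yi 0, yi 2, yi 3, 1)]

/-- Presentation `𝒫₁₀^{(2,1)}`: `(x₃y₄,y₅)=1, (x₂y₃,y₅)=1, (x₁y₃,y₄)=1, (y₁y₂,y₅)=1`. -/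
def P21 : Pres F :=
  [(xi 2, yi 3, yi 4, 1), (xi 1, yi 2, yi 4, 1), (xi 0, yi 2, yi 3, 1), (yi 0, yi 1, yi 4, 1)]

/-- Presentation `𝒫₁₀^{(2,2)}(r)`: `(x₃y₄,y₅)=r, (x₂y₃,y₅)=1, (x₁y₃,y₄)=1, (y₁y₂,y₃)=1`. -/
def P22 (r : F) : Pres F :=
  [(xi 2, yi 3, yi 4, r), (xi 1, yi 2, yi 4, 1), (xi 0, yi 2, yi 3, 1), (yi 0, yi 1, yi 2, 1)]

/-- Presentation `𝒫₁₀^{(2,3)}`: `(x₃y₄,y₅)=1, (x₂y₃,y₅)=1, (x₁y₂,y₅)=1, (y₁y₂,y₄)=1`. -/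
def P23 : Pres F :=
  [(xi 2, yi 3, yi 4, 1), (xi 1, yi 2, yi 4, 1), (xi 0, yi 1, yi 4, 1), (yi 0, yi 1, yi 3, 1)]

/-- Presentation `𝒫₁₀^{(2,4)}(r)`:
`(x₃y₄,y₅)=r, (x₂y₃,y₅)=1, (x₁y₂,y₅)=1, (x₁y₃,y₄)=1, (y₁y₂,y₄)=1`. -/
def P24 (r : F) : Pres F :=
  [(xi 2, yi 3, yi 4, r), (xi 1, yi 2, yi 4, 1), (xi 0, yi 1, yi 4, 1),
   (xi 0, yi 2, yi 3, 1), (yi 0, yi 1, yi 3, 1)]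

/-- Presentation `𝒫₁₀^{(2,5)}(r)`: `(x₂y₃,y₅)=r, (x₃y₄,y₅)=1, (x₁y₂,y₅)=1, (y₁y₂,y₃)=1`. -/
def P25 (r : F) : Pres F :=
  [(xi 1, yi 2, yi 4, r), (xi 2, yi 3, yi 4, 1), (xi 0, yi 1, yi 4, 1), (yi 0, yi 1, yi 2, 1)]

/-- Presentation `𝒫₁₀^{(2,6)}(r)`:
`(x₂y₃,y₅)=r, (x₃y₄,y₅)=1, (x₁y₂,y₅)=1, (x₁y₃,y₄)=1, (y₁y₂,y₃)=1`. -/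
def P26 (r : F) : Pres F :=
  [(xi 1, yi 2, yi 4, r), (xi 2, yi 3, yi 4, 1), (xi 0, yi 1, yi 4, 1),
   (xi 0, yi 2, yi 3, 1), (yi 0, yi 1, yi 2, 1)]

/-- Presentation `𝒫₁₀^{(2,7)}`: `(x₂y₃,y₅)=1, (x₃y₄,y₅)=1, (x₁y₂,y₄)=1, (y₁y₂,y₃)=1`. -/
def P27 : Pres F :=
  [(xi 1, yi 2, yi 4, 1), (xi 2, yi 3, yi 4, 1), (xi 0, yi 1, yi 3, 1), (yi 0, yi 1, yi 2, 1)]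

end SAA

namespace SAA

variable {F : Type u} [Field F] (L : SAA F)

lemma form_skew (x y : L.carrier) : L.form x y = - L.form y x := by
  have h := L.form_alt (x + y)
  simp only [map_add, LinearMap.add_apply, L.form_alt] at h
  linear_combination h

lemma mul_skew (x y : L.carrier) : L.mul x y = - L.mul y x := by
  have h := L.mul_alt (x + y)
  simp only [map_add, LinearMap.add_apply, L.mul_alt, zero_add, add_zero] at h
  exact eq_neg_of_add_eq_zero_right h

lemma form_mul_swap (u v w : L.carrier) :
    L.form (L.mul u v) w = - L.form (L.mul u w) v := by
  rw [L.form_symm u v w, L.form_symm u w v, L.mul_skew w v, map_neg,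
    LinearMap.neg_apply, neg_neg]

lemma P44_zero {b : Fin 5 ⊕ Fin 5 → L.carrier} {α β : F}
    (hzero : ∀ i j k : Fin 5 ⊕ Fin 5,
      (∀ e ∈ P44 F α β, ({i, j, k} : Multiset (Fin 5 ⊕ Fin 5)) ≠ {e.1, e.2.1, e.2.2.1}) →
      L.triple (b i) (b j) (b k) = 0)
    (i j k : Fin 5 ⊕ Fin 5)
    (h1 : ({i, j, k} : Multiset (Fin 5 ⊕ Fin 5)) ≠ {xi 0, yi 1, yi 2})
    (h2 : ({i, j, k} : Multiset (Fin 5 ⊕ Fin 5)) ≠ {xi 0, yi 2, yi 3})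
    (h3 : ({i, j, k} : Multiset (Fin 5 ⊕ Fin 5)) ≠ {xi 0, yi 3, yi 4})
    (h4 : ({i, j, k} : Multiset (Fin 5 ⊕ Fin 5)) ≠ {yi 0, yi 1, yi 4})
    (h5 : ({i, j, k} : Multiset (Fin 5 ⊕ Fin 5)) ≠ {yi 0, yi 2, yi 3}) :
    L.form (L.mul (b i) (b j)) (b k) = 0 := by
  refine hzero i j k ?_
  intro e he
  simp only [P44, List.mem_cons, List.not_mem_nil, or_false] at he
  rcases he with rfl | rfl | rfl | rfl | rfl
  exacts [h1, h2, h3, h4, h5]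

set_option maxHeartbeats 4000000 in
lemma key_x {b : Fin 5 ⊕ Fin 5 → L.carrier} {α β : F} (hb : L.IsPresBasis b (P44 F α β))
    (u v : L.carrier) :
    L.form (L.mul (b (xi 0)) u) v =
      L.form u (b (xi 1)) * L.form v (b (xi 2)) - L.form u (b (xi 2)) * L.form v (b (xi 1))
      + α * (L.form u (b (xi 2)) * L.form v (b (xi 3))
          - L.form u (b (xi 3)) * L.form v (b (xi 2)))
      + β * (L.form u (b (xi 3)) * L.form v (b (xi 4))
          - L.form u (b (xi 4)) * L.form v (b (xi 3))) := by
  obtain ⟨⟨hli, hsp, hxx, hyy, hxy⟩, hval, hzero⟩ := hb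
  have hyx : ∀ i j : Fin 5, L.form (b (Sum.inr i)) (b (Sum.inl j)) =
      if j = i then -1 else 0 := by
    intro i j
    rw [L.form_skew, hxy j i]
    split_ifs <;> norm_num
  have hv1 : L.form (L.mul (b (Sum.inl 0)) (b (Sum.inr 1))) (b (Sum.inr 2)) = 1 :=
    hval (xi 0, yi 1, yi 2, 1) (by simp [P44])
  have hv2 : L.form (L.mul (b (Sum.inl 0)) (b (Sum.inr 2))) (b (Sum.inr 3)) = α :=
    hval (xi 0, yi 2, yi 3, α) (by simp [P44])
  have hv3 : L.form (L.mul (b (Sum.inl 0)) (b (Sum.inr 3))) (b (Sum.inr 4)) = β :=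
    hval (xi 0, yi 3, yi 4, β) (by simp [P44])
  let Bas : Module.Basis (Fin 5 ⊕ Fin 5) F L.carrier := Module.Basis.mk hli hsp.ge
  have key : (L.form ∘ₗ L.mul (b (xi 0))) =
      ((L.form.flip (b (xi 1))).smulRight (L.form.flip (b (xi 2)))
        - (L.form.flip (b (xi 2))).smulRight (L.form.flip (b (xi 1))))
      + α • ((L.form.flip (b (xi 2))).smulRight (L.form.flip (b (xi 3)))
        - (L.form.flip (b (xi 3))).smulRight (L.form.flip (b (xi 2))))
      + β • ((L.form.flip (b (xi 3))).smulRight (L.form.flip (b (xi 4)))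
        - (L.form.flip (b (xi 4))).smulRight (L.form.flip (b (xi 3)))) := by
    refine Module.Basis.ext Bas fun i => Module.Basis.ext Bas fun j => ?_
    simp only [Bas, Module.Basis.mk_apply, LinearMap.comp_apply, LinearMap.add_apply,
      LinearMap.sub_apply, LinearMap.smul_apply, LinearMap.smulRight_apply,
      LinearMap.flip_apply, smul_eq_mul]
    rcases i with i | i <;> rcases j with j | j <;> fin_cases i <;> fin_cases j <;>
      simp [xi, yi, hxx, hxy, hyx] <;>
      first
        | exact P44_zero L hzero _ _ _ (by decide) (by decide) (by decide) (by decide)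
            (by decide)
        | exact hv1
        | exact hv2
        | exact hv3
        | (rw [L.form_mul_swap, hv1]; all_goals ring)
        | (rw [L.form_mul_swap, hv2]; all_goals ring)
        | (rw [L.form_mul_swap, hv3]; all_goals ring)
  have h := LinearMap.congr_fun (LinearMap.congr_fun key u) v
  simpa only [LinearMap.comp_apply, LinearMap.add_apply, LinearMap.sub_apply,
    LinearMap.smul_apply, LinearMap.smulRight_apply, LinearMap.flip_apply,
    smul_eq_mul] using h


set_option maxHeartbeats 4000000 in
lemma key_y {b : Fin 5 ⊕ Fin 5 → L.carrier} {α β : F} (hb : L.IsPresBasis b (P44 F α β))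
    (u v : L.carrier) :
    L.form (L.mul (b (yi 0)) u) v =
      L.form u (b (xi 1)) * L.form v (b (xi 4)) - L.form u (b (xi 4)) * L.form v (b (xi 1))
      + (L.form u (b (xi 2)) * L.form v (b (xi 3))
          - L.form u (b (xi 3)) * L.form v (b (xi 2))) := by
  obtain ⟨⟨hli, hsp, hxx, hyy, hxy⟩, hval, hzero⟩ := hb
  have hyx : ∀ i j : Fin 5, L.form (b (Sum.inr i)) (b (Sum.inl j)) =
      if j = i then -1 else 0 := by
    intro i j
    rw [L.form_skew, hxy j i]
    split_ifs <;> norm_num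
  have hw1 : L.form (L.mul (b (Sum.inr 0)) (b (Sum.inr 1))) (b (Sum.inr 4)) = 1 :=
    hval (yi 0, yi 1, yi 4, 1) (by simp [P44])
  have hw2 : L.form (L.mul (b (Sum.inr 0)) (b (Sum.inr 2))) (b (Sum.inr 3)) = 1 :=
    hval (yi 0, yi 2, yi 3, 1) (by simp [P44])
  let Bas : Module.Basis (Fin 5 ⊕ Fin 5) F L.carrier := Module.Basis.mk hli hsp.ge
  have key : (L.form ∘ₗ L.mul (b (yi 0))) =
      ((L.form.flip (b (xi 1))).smulRight (L.form.flip (b (xi 4)))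
        - (L.form.flip (b (xi 4))).smulRight (L.form.flip (b (xi 1))))
      + ((L.form.flip (b (xi 2))).smulRight (L.form.flip (b (xi 3)))
        - (L.form.flip (b (xi 3))).smulRight (L.form.flip (b (xi 2)))) := by
    refine Module.Basis.ext Bas fun i => Module.Basis.ext Bas fun j => ?_
    simp only [Bas, Module.Basis.mk_apply, LinearMap.comp_apply, LinearMap.add_apply,
      LinearMap.sub_apply, LinearMap.smul_apply, LinearMap.smulRight_apply,
      LinearMap.flip_apply, smul_eq_mul]
    rcases i with i | i <;> rcases j with j | j <;> fin_cases i <;> fin_cases j <;>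
      simp [xi, yi, hxx, hxy, hyx] <;>
      first
        | exact P44_zero L hzero _ _ _ (by decide) (by decide) (by decide) (by decide)
            (by decide)
        | exact hw1
        | exact hw2
        | (rw [L.form_mul_swap, hw1]; all_goals ring)
        | (rw [L.form_mul_swap, hw2]; all_goals ring)
  have h := LinearMap.congr_fun (LinearMap.congr_fun key u) v
  simpa only [LinearMap.comp_apply, LinearMap.add_apply, LinearMap.sub_apply,
    LinearMap.smul_apply, LinearMap.smulRight_apply, LinearMap.flip_apply,
    smul_eq_mul] using h

end SAA
set_option maxHeartbeats 4000000 in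
/-- Lemma 2.5. For a nilpotent SAA of dimension 10 with isotropic
centre of dimension 4, `L³ = Z(L)`, of type C: the parameters `α, β` of a presentation
`𝒫₁₀^{(4,4)}(α,β)` are the same for all presentations with fixed `x₁ + Z(L)` and
`y₁ + Z(L)`. -/
theorem P44_parameters_determined
    {F : Type u} [Field F] (L : SAA F) (h : L.Cond4C)
    (b b' : Fin 5 ⊕ Fin 5 → L.carrier) (α β α' β' : F)
    (hb : L.IsPresBasis b (SAA.P44 F α β)) (hb' : L.IsPresBasis b' (SAA.P44 F α' β'))
    (hx : b' (SAA.xi 0) - b (SAA.xi 0) ∈ L.centre)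
    (hy : b' (SAA.yi 0) - b (SAA.yi 0) ∈ L.centre) :
    α' = α ∧ β' = β := by
  have hx' : ∀ u : L.carrier, L.mul (b' (SAA.xi 0) - b (SAA.xi 0)) u = 0 := hx
  have hy' : ∀ u : L.carrier, L.mul (b' (SAA.yi 0) - b (SAA.yi 0)) u = 0 := hy
  have hmulx : ∀ u : L.carrier, L.mul (b' (SAA.xi 0)) u = L.mul (b (SAA.xi 0)) u := by
    intro u
    have he : b' (SAA.xi 0) = b (SAA.xi 0) + (b' (SAA.xi 0) - b (SAA.xi 0)) := by abel
    rw [he, map_add, LinearMap.add_apply, hx' u, add_zero]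
  have hmuly : ∀ u : L.carrier, L.mul (b' (SAA.yi 0)) u = L.mul (b (SAA.yi 0)) u := by
    intro u
    have he : b' (SAA.yi 0) = b (SAA.yi 0) + (b' (SAA.yi 0) - b (SAA.yi 0)) := by abel
    rw [he, map_add, LinearMap.add_apply, hy' u, add_zero]
  have eA12 : L.form (L.mul (b' (SAA.xi 0)) (b' (SAA.yi 1))) (b' (SAA.yi 2)) = 1 :=
    hb'.2.1 (SAA.xi 0, SAA.yi 1, SAA.yi 2, 1) (by simp [SAA.P44])
  have eA23 : L.form (L.mul (b' (SAA.xi 0)) (b' (SAA.yi 2))) (b' (SAA.yi 3)) = α' :=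
    hb'.2.1 (SAA.xi 0, SAA.yi 2, SAA.yi 3, α') (by simp [SAA.P44])
  have eA34 : L.form (L.mul (b' (SAA.xi 0)) (b' (SAA.yi 3))) (b' (SAA.yi 4)) = β' :=
    hb'.2.1 (SAA.xi 0, SAA.yi 3, SAA.yi 4, β') (by simp [SAA.P44])
  have eB14 : L.form (L.mul (b' (SAA.yi 0)) (b' (SAA.yi 1))) (b' (SAA.yi 4)) = 1 :=
    hb'.2.1 (SAA.yi 0, SAA.yi 1, SAA.yi 4, 1) (by simp [SAA.P44])
  have eB23 : L.form (L.mul (b' (SAA.yi 0)) (b' (SAA.yi 2))) (b' (SAA.yi 3)) = 1 :=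
    hb'.2.1 (SAA.yi 0, SAA.yi 2, SAA.yi 3, 1) (by simp [SAA.P44])
  have eA13 : L.form (L.mul (b' (SAA.xi 0)) (b' (SAA.yi 1))) (b' (SAA.yi 3)) = 0 :=
    L.P44_zero hb'.2.2 _ _ _ (by decide) (by decide) (by decide) (by decide) (by decide)
  have eA14 : L.form (L.mul (b' (SAA.xi 0)) (b' (SAA.yi 1))) (b' (SAA.yi 4)) = 0 :=
    L.P44_zero hb'.2.2 _ _ _ (by decide) (by decide) (by decide) (by decide) (by decide)
  have eA24 : L.form (L.mul (b' (SAA.xi 0)) (b' (SAA.yi 2))) (b' (SAA.yi 4)) = 0 :=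
    L.P44_zero hb'.2.2 _ _ _ (by decide) (by decide) (by decide) (by decide) (by decide)
  have eB12 : L.form (L.mul (b' (SAA.yi 0)) (b' (SAA.yi 1))) (b' (SAA.yi 2)) = 0 :=
    L.P44_zero hb'.2.2 _ _ _ (by decide) (by decide) (by decide) (by decide) (by decide)
  have eB13 : L.form (L.mul (b' (SAA.yi 0)) (b' (SAA.yi 1))) (b' (SAA.yi 3)) = 0 :=
    L.P44_zero hb'.2.2 _ _ _ (by decide) (by decide) (by decide) (by decide) (by decide)
  have eB24 : L.form (L.mul (b' (SAA.yi 0)) (b' (SAA.yi 2))) (b' (SAA.yi 4)) = 0 :=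
    L.P44_zero hb'.2.2 _ _ _ (by decide) (by decide) (by decide) (by decide) (by decide)
  have eB34 : L.form (L.mul (b' (SAA.yi 0)) (b' (SAA.yi 3))) (b' (SAA.yi 4)) = 0 :=
    L.P44_zero hb'.2.2 _ _ _ (by decide) (by decide) (by decide) (by decide) (by decide)
  rw [hmulx, L.key_x hb] at eA12 eA13 eA14 eA23 eA24 eA34
  rw [hmuly, L.key_y hb] at eB12 eB13 eB14 eB23 eB24 eB34
  set m11 := L.form (b' (SAA.yi 1)) (b (SAA.xi 1)) with hm11
  set m12 := L.form (b' (SAA.yi 2)) (b (SAA.xi 1)) with hm12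
  set m13 := L.form (b' (SAA.yi 3)) (b (SAA.xi 1)) with hm13
  set m14 := L.form (b' (SAA.yi 4)) (b (SAA.xi 1)) with hm14
  set m21 := L.form (b' (SAA.yi 1)) (b (SAA.xi 2)) with hm21
  set m22 := L.form (b' (SAA.yi 2)) (b (SAA.xi 2)) with hm22
  set m23 := L.form (b' (SAA.yi 3)) (b (SAA.xi 2)) with hm23
  set m24 := L.form (b' (SAA.yi 4)) (b (SAA.xi 2)) with hm24
  set m31 := L.form (b' (SAA.yi 1)) (b (SAA.xi 3)) with hm31
  set m32 := L.form (b' (SAA.yi 2)) (b (SAA.xi 3)) with hm32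
  set m33 := L.form (b' (SAA.yi 3)) (b (SAA.xi 3)) with hm33
  set m34 := L.form (b' (SAA.yi 4)) (b (SAA.xi 3)) with hm34
  set m41 := L.form (b' (SAA.yi 1)) (b (SAA.xi 4)) with hm41
  set m42 := L.form (b' (SAA.yi 2)) (b (SAA.xi 4)) with hm42
  set m43 := L.form (b' (SAA.yi 3)) (b (SAA.xi 4)) with hm43
  set m44 := L.form (b' (SAA.yi 4)) (b (SAA.xi 4)) with hm44
  refine ⟨?_, ?_⟩
  · linear_combination (-(m11*m22 - m21*m12 + α*(m21*m32 - m31*m22) + β*(m31*m42 - m41*m32)))*eB34 - (m11*m42 - m41*m12 + m21*m32 - m31*m22)*eA34 - β'*eB12 + (m11*m23 - m21*m13 + α*(m21*m33 - m31*m23) + β*(m31*m43 - m41*m33))*eB24 + (m11*m43 - m41*m13 + m21*m33 - m31*m23)*eA24 - (m11*m24 - m21*m14 + α*(m21*m34 - m31*m24) + β*(m31*m44 - m41*m34))*eB23 - eA14 - (m11*m44 - m41*m14 + m21*m34 - m31*m24)*eA23 - α'*eB14 + α*(m11*m42 - m41*m12 + m21*m32 - m31*m22)*eB34 - α*(m11*m43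 - m41*m13 + m21*m33 - m31*m23)*eB24 + α*(m11*m44 - m41*m14 + m21*m34 - m31*m24)*eB23 + α*eB14
  · linear_combination (-(m11*m22 - m21*m12 + α*(m21*m32 - m31*m22) + β*(m31*m42 - m41*m32)))*eA34 - β'*eA12 + (m11*m23 - m21*m13 + α*(m21*m33 - m31*m23) + β*(m31*m43 - m41*m33))*eA24 - (m11*m24 - m21*m14 + α*(m21*m34 - m31*m24) + β*(m31*m44 - m41*m34))*eA23 - α'*eA14 + β*(m11*m42 - m41*m12 + m21*m32 - m31*m22)*eB34 - β*(m11*m43 - m41*m13 + m21*m33 - m31*m23)*eB24 + β*(m11*m44 - m41*m14 + m21*m34 - m31*m24)*eB23 + β*eB14
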